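/- arXiv:1407.3558 — 4 statements merged into one kernel-verified Lean document; each statement's English description precedes it below -/
import Mathlib

section
/- Let V be a finite-dimensional nondegenerate quadratic space over a nonarchimedean local field F_v of characteristic 0 with ring of integers o_v, let L_v be an o_v-lattice of full rank in V, and let u_0 ∈ V with u_0 ∉ L_v. Then the image q(L_v + u_0) of the coset L_v + u_0 under the quadratic form q is an open and compact subset of F_v. -/
open Filter Set
open scoped Topology

/-- Let `V` be a finite-dimensional nondegenerate quadratic space over the
nonarchimedean local field `ℚ_[p]` with ring of integers `ℤ_[p]`, let `L` be a full-rank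
`ℤ_[p]`-lattice in `V` and `u₀ ∈ V` with `u₀ ∉ L`.  Then the image `Q(L + u₀)` of the coset
`L + u₀` under the quadratic form `Q` is open and compact in `ℚ_[p]`. -/
theorem stmt_0 (p : ℕ) [Fact p.Prime] (V : Type*) [NormedAddCommGroup V]
    [NormedSpace ℚ_[p] V] [FiniteDimensional ℚ_[p] V]
    [Module ℤ_[p] V] [IsScalarTower ℤ_[p] ℚ_[p] V]
    (Q : QuadraticForm ℚ_[p] V) (hQ : Q.polarBilin.Nondegenerate)
    (L : Submodule ℤ_[p] V) (hfg : L.FG)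
    (hfull : Submodule.span ℚ_[p] (L : Set V) = ⊤)
    (u₀ : V) (hu₀ : u₀ ∉ L) :
    IsOpen (Q '' {x : V | ∃ l ∈ L, x = l + u₀}) ∧
      IsCompact (Q '' {x : V | ∃ l ∈ L, x = l + u₀}) := by
  set S : Set V := {x : V | ∃ l ∈ L, x = l + u₀} with hS
  -- the ℤ_[p]-scalar action is via the coercion ℤ_[p] → ℚ_[p]
  have hsmul : ∀ (c : ℤ_[p]) (v : V), c • v = (c : ℚ_[p]) • v := fun c v => by
    rw [← algebraMap_smul ℚ_[p] c v]; rfl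
  -- `S` is a translate of `L`
  have hSim : S = (fun x => x + u₀) '' (L : Set V) := by
    ext x
    constructor
    · rintro ⟨l, hl, rfl⟩; exact ⟨l, hl, rfl⟩
    · rintro ⟨l, hl, rfl⟩; exact ⟨l, hl, rfl⟩
  -- ** compactness of L **
  have hLcompact : IsCompact (L : Set V) := by
    obtain ⟨s, hs⟩ := hfg
    have : (L : Set V) = Set.range (fun c : V → ℤ_[p] => ∑ i ∈ s, (c i : ℚ_[p]) • i) := by
      ext x
      rw [← hs, SetLike.mem_coe, Submodule.mem_span_finset]
      constructor
      · rintro ⟨f, -, hf⟩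
        exact ⟨f, by simp_rw [← hsmul]; exact hf⟩
      · rintro ⟨f, hf⟩
        classical
        refine ⟨fun i => if i ∈ s then f i else 0, fun i hi => by by_contra h; exact hi (if_neg h), ?_⟩
        rw [← hf]; exact Finset.sum_congr rfl fun i hi => by simp only [if_pos hi]; exact hsmul _ _
    rw [this]
    apply isCompact_range
    exact continuous_finset_sum _ fun i _ =>
      (continuous_subtype_val.comp (continuous_apply i)).smul continuous_const
  have hScompact : IsCompact S := by
    rw [hSim]
    exact hLcompact.image (continuous_id.add continuous_const)
  -- ** continuity of Q **
  have hQcont : Continuous Q := by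
    let B' : V →ₗ[ℚ_[p]] (V →L[ℚ_[p]] ℚ_[p]) :=
      (LinearMap.toContinuousLinearMap :
        (V →ₗ[ℚ_[p]] ℚ_[p]) ≃ₗ[ℚ_[p]] (V →L[ℚ_[p]] ℚ_[p])).toLinearMap ∘ₗ Q.polarBilin
    have hB' : Continuous fun x : V => B' x x :=
      B'.continuous_of_finiteDimensional.clm_apply continuous_id
    have hQeq : ∀ x : V, Q x = (2⁻¹ : ℚ_[p]) * B' x x := by
      intro x
      have : B' x x = QuadraticMap.polar Q x x := rfl
      rw [this, QuadraticMap.polar_self]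
      ring
    rw [show (Q : V → ℚ_[p]) = fun x => (2⁻¹ : ℚ_[p]) * B' x x from funext hQeq]
    exact continuous_const.mul hB'
  -- ** openness of L (and hence of S) **
  have hLopen : IsOpen (L : Set V) := by
    obtain ⟨b, hbL, hbspan, hbind⟩ := exists_linearIndependent ℚ_[p] (L : Set V)
    rw [hfull] at hbspan
    have hbfin : b.Finite := hbind.setFinite
    haveI : Fintype b := hbfin.fintype
    let β : Module.Basis b ℚ_[p] V := Module.Basis.mk hbind (by rw [← hbspan]; exact le_of_eq (by simp))
    set U : Set V := ⋂ i : b, (fun x => β.equivFunL x i) ⁻¹' Metric.closedBall 0 1 with hU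
    have hUopen : IsOpen U := by
      apply isOpen_iInter_of_finite
      intro i
      exact (IsUltrametricDist.isOpen_closedBall (0 : ℚ_[p]) one_ne_zero).preimage
        ((continuous_apply i).comp β.equivFunL.continuous)
    have hUL : U ⊆ (L : Set V) := by
      intro x hx
      have hxsum : ∑ i : b, β.equivFun x i • β i = x := β.sum_equivFun x
      rw [← hxsum]
      apply sum_mem
      intro i _
      have hnorm : ‖β.equivFun x i‖ ≤ 1 := by
        have := Set.mem_iInter.1 hx i
        simpa using this
      obtain ⟨z, hz⟩ : ∃ z : ℤ_[p], (z : ℚ_[p]) = β.equivFun x i := ⟨⟨_, hnorm⟩, rfl⟩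
      rw [← hz, ← hsmul]
      exact Submodule.smul_mem _ _ (by rw [Module.Basis.mk_apply]; exact hbL i.2)
    have h0U : (0 : V) ∈ U := by
      refine Set.mem_iInter.2 fun i => ?_
      simp
    exact AddSubgroup.isOpen_of_mem_nhds L.toAddSubgroup
      (Filter.mem_of_superset (hUopen.mem_nhds h0U) hUL)
  have hSopen : IsOpen S := by
    rw [hSim]
    exact (isOpenMap_add_right u₀) _ hLopen
  refine ⟨?_, hScompact.image hQcont⟩
  -- ** openness of the image **
  rw [isOpen_iff_mem_nhds]
  rintro y ⟨x, hxS, rfl⟩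
  -- x ≠ 0
  have hx0 : x ≠ 0 := by
    rintro rfl
    obtain ⟨l, hl, hl0⟩ := hxS
    apply hu₀
    have : u₀ = -l := eq_neg_of_add_eq_zero_right hl0.symm
    rw [this]
    exact neg_mem hl
  -- find v with polar Q x v ≠ 0
  have hv : ∃ v : V, QuadraticMap.polar Q x v ≠ 0 := by
    by_contra h
    push_neg at h
    exact hx0 (hQ.1 x fun n => h n)
  obtain ⟨v, hv⟩ := hv
  set c : ℚ_[p] := QuadraticMap.polar Q x v with hc
  set g : ℚ_[p] → ℚ_[p] := fun t => Q (x + t • v) with hg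
  have hgeq : g = fun t : ℚ_[p] => Q x + c * t + Q v * (t * t) := by
    funext t
    have h1 : Q (x + t • v) = Q x + Q (t • v) + QuadraticMap.polar Q x (t • v) := by
      simp [QuadraticMap.polar]
    have h2 : Q (t • v) = (t * t) * Q v := by
      rw [QuadraticMap.map_smul]; simp [smul_eq_mul]
    have h3 : QuadraticMap.polar Q x (t • v) = t * QuadraticMap.polar Q x v := by
      rw [QuadraticMap.polar_smul_right]; simp [smul_eq_mul]
    rw [hg]
    simp only [h1, h2, h3, ← hc]
    ring
  have hstrict : HasStrictDerivAt g c 0 := by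
    rw [hgeq]
    have h1 := hasStrictDerivAt_id (0 : ℚ_[p])
    have := ((h1.const_mul c).const_add (Q x)).add ((h1.mul h1).const_mul (Q v))
    simp at this; exact this
  have hmap : Filter.map g (𝓝 0) = 𝓝 (Q x) := by
    have := hstrict.map_nhds_eq hv
    simpa [hg] using this
  rw [← hmap, Filter.mem_map]
  have hT : (fun t : ℚ_[p] => x + t • v) ⁻¹' S ∈ 𝓝 (0 : ℚ_[p]) := by
    apply (hSopen.preimage (continuous_const.add (continuous_id.smul continuous_const))).mem_nhds
    simpa using hxS
  filter_upwards [hT] with t ht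
  exact ⟨x + t • v, ht, rfl⟩
end

section
/- Let V be a finite-dimensional nondegenerate quadratic space over a nonarchimedean local field F_v with ring of integers o_v and uniformizer π_v, let L_v be a full-rank lattice in V, and let u_0 ∈ V with u_0 ∉ L_v. Then there exists an open subgroup U of the unit group o_v^× such that α·U ⊆ q(L_v + u_0) for every α ∈ q(L_v + u_0). -/
lemma zsmul_eq_qsmul {p : ℕ} [Fact p.Prime] {V : Type*} [AddCommGroup V]
    [Module ℚ_[p] V] [Module ℤ_[p] V] [IsScalarTower ℤ_[p] ℚ_[p] V]
    (a : ℤ_[p]) (x : V) : a • x = (a : ℚ_[p]) • x := by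
  rw [← PadicInt.algebraMap_apply, algebraMap_smul]

lemma exists_pow_smul_mem {p : ℕ} [Fact p.Prime] {V : Type*} [AddCommGroup V]
    [Module ℚ_[p] V] [Module ℤ_[p] V] [IsScalarTower ℤ_[p] ℚ_[p] V]
    (L : Submodule ℤ_[p] V) (hfull : Submodule.span ℚ_[p] (L : Set V) = ⊤)
    (v : V) : ∃ k : ℕ, ((p : ℤ_[p]) ^ k) • v ∈ L := by
  have hv : v ∈ Submodule.span ℚ_[p] (L : Set V) := by rw [hfull]; trivial
  induction hv using Submodule.span_induction with
  | mem x hx => exact ⟨0, by simpa using hx⟩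
  | zero => exact ⟨0, by simp⟩
  | add x y hx hy ihx ihy =>
    obtain ⟨k₁, h₁⟩ := ihx
    obtain ⟨k₂, h₂⟩ := ihy
    refine ⟨max k₁ k₂, ?_⟩
    rw [smul_add]
    have e₁ : ((p : ℤ_[p]) ^ max k₁ k₂) • x
        = ((p : ℤ_[p]) ^ (max k₁ k₂ - k₁)) • (((p : ℤ_[p]) ^ k₁) • x) := by
      rw [smul_smul, ← pow_add, Nat.sub_add_cancel (le_max_left _ _)]
    have e₂ : ((p : ℤ_[p]) ^ max k₁ k₂) • y
        = ((p : ℤ_[p]) ^ (max k₁ k₂ - k₂)) • (((p : ℤ_[p]) ^ k₂) • y) := by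
      rw [smul_smul, ← pow_add, Nat.sub_add_cancel (le_max_right _ _)]
    rw [e₁, e₂]
    exact L.add_mem (L.smul_mem _ h₁) (L.smul_mem _ h₂)
  | smul c x hx ihx =>
    obtain ⟨k, hk⟩ := ihx
    obtain ⟨m, hm⟩ : ∃ m : ℕ, ‖c‖ ≤ (p : ℝ) ^ m := by
      obtain ⟨m, hm⟩ := exists_nat_gt ‖c‖
      exact ⟨m, le_trans hm.le (by exact_mod_cast (Nat.lt_pow_self (n := m)
        (Fact.out : p.Prime).one_lt).le)⟩
    have hd : ‖(p : ℚ_[p]) ^ m * c‖ ≤ 1 := by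
      rw [norm_mul, norm_pow, Padic.norm_p, inv_pow]
      have hppos : (0:ℝ) < (p:ℝ)^m := by
        have : (0:ℝ) < (p:ℝ) := by exact_mod_cast (Fact.out : p.Prime).pos
        positivity
      calc ((p:ℝ)^m)⁻¹ * ‖c‖ ≤ ((p:ℝ)^m)⁻¹ * (p:ℝ)^m :=
            mul_le_mul_of_nonneg_left hm (by positivity)
        _ = 1 := inv_mul_cancel₀ (ne_of_gt hppos)
    refine ⟨m + k, ?_⟩
    set d : ℤ_[p] := ⟨(p : ℚ_[p]) ^ m * c, hd⟩ with hdd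
    have key : ((p : ℤ_[p]) ^ (m + k)) • (c • x)
        = d • (((p : ℤ_[p]) ^ k) • x) := by
      rw [zsmul_eq_qsmul ((p : ℤ_[p]) ^ (m+k)), zsmul_eq_qsmul d,
        zsmul_eq_qsmul ((p : ℤ_[p]) ^ k)]
      have hdc : (d : ℚ_[p]) = (p : ℚ_[p]) ^ m * c := rfl
      push_cast [hdc]
      rw [smul_smul, show (p:ℚ_[p]) ^ (m + k) * c = (p:ℚ_[p]) ^ m * c * (p:ℚ_[p]) ^ k by ring, mul_smul]
    rw [key]
    exact L.smul_mem _ hk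

/-- With `V` a finite-dimensional nondegenerate quadratic space over `ℚ_[p]`,
`L` a full-rank `ℤ_[p]`-lattice and `u₀ ∉ L`, there is an open subgroup
`U = 1 + p^n ℤ_[p] = {u : ‖u - 1‖ ≤ p^{-n}}` of the unit group `ℤ_[p]ˣ` such that
`α·U ⊆ Q(L + u₀)` for every `α ∈ Q(L + u₀)`. -/
theorem stmt_1 (p : ℕ) [Fact p.Prime] (V : Type*) [NormedAddCommGroup V]
    [NormedSpace ℚ_[p] V] [FiniteDimensional ℚ_[p] V]
    [Module ℤ_[p] V] [IsScalarTower ℤ_[p] ℚ_[p] V]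
    (Q : QuadraticForm ℚ_[p] V) (hQ : Q.polarBilin.Nondegenerate)
    (L : Submodule ℤ_[p] V) (hfg : L.FG)
    (hfull : Submodule.span ℚ_[p] (L : Set V) = ⊤)
    (u₀ : V) (hu₀ : u₀ ∉ L) :
    ∃ U : Set ℚ_[p], (∃ n : ℕ, 0 < n ∧ U = {u : ℚ_[p] | ‖u - 1‖ ≤ (p : ℝ) ^ (-(n : ℤ))}) ∧
      ∀ α ∈ Q '' {x : V | ∃ l ∈ L, x = l + u₀}, ∀ u ∈ U,
        α * u ∈ Q '' {x : V | ∃ l ∈ L, x = l + u₀} := by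
  have hp : p.Prime := Fact.out
  have hp1 : (1:ℝ) < (p:ℝ) := by exact_mod_cast hp.one_lt
  have hp0 : (0:ℝ) < (p:ℝ) := by linarith
  obtain ⟨k, hk⟩ := exists_pow_smul_mem L hfull u₀
  set n : ℕ := k + 5 with hn
  refine ⟨{u : ℚ_[p] | ‖u - 1‖ ≤ (p : ℝ) ^ (-(n : ℤ))}, ⟨n, by omega, rfl⟩, ?_⟩
  rintro α ⟨x, ⟨l, hl, rfl⟩, rfl⟩ u hu
  simp only [Set.mem_setOf_eq] at hu
  -- ‖2‖ > p^{-2}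
  have h2 : (p : ℝ) ^ (-(2:ℕ) : ℤ) < ‖(2 : ℤ_[p])‖ := by
    rw [lt_iff_not_ge]
    intro h
    have hdvd : ((p:ℤ) ^ 2) ∣ (2:ℤ) :=
      (PadicInt.norm_int_le_pow_iff_dvd (p := p) (k := (2:ℤ)) (n := 2)).mp (by exact_mod_cast h)
    have hple : (2:ℤ) ≤ (p:ℤ) := by exact_mod_cast hp.two_le
    have h4 : (4:ℤ) ≤ (p:ℤ)^2 := by nlinarith
    have := Int.le_of_dvd (by norm_num) hdvd
    omega
  have h2pos : (0:ℝ) < ‖(2 : ℤ_[p])‖ := lt_trans (by positivity) h2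
  -- u is a p-adic integer
  have hun : (p : ℝ) ^ (-(n:ℤ)) ≤ 1 := zpow_le_one_of_nonpos₀ hp1.le (by omega)
  have hule : ‖u‖ ≤ 1 := by
    have : ‖(u - 1) + 1‖ ≤ max ‖u - 1‖ ‖(1:ℚ_[p])‖ := Padic.nonarchimedean _ _
    rw [sub_add_cancel] at this
    exact le_trans this (max_le (le_trans hu hun) (by simp))
  set u' : ℤ_[p] := ⟨u, hule⟩ with hu'def
  have hu'c : ((u' : ℚ_[p])) = u := rfl
  -- Hensel's lemma for F = X² - u at a = 1
  set F : Polynomial ℤ_[p] := Polynomial.X ^ 2 - Polynomial.C u' with hF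
  have hFeval : ∀ z : ℤ_[p], F.eval z = z ^ 2 - u' := by intro z; simp [hF]
  have hFd : ∀ z : ℤ_[p], F.derivative.eval z = 2 * z := by
    intro z; simp [hF, Polynomial.derivative_pow]; try ring
  have hnorm1u : ‖(1:ℤ_[p]) - u'‖ = ‖u - 1‖ := by
    rw [← norm_neg, neg_sub, PadicInt.norm_def]
    congr 1
    try push_cast [hu'c]
    try ring
  have hsmall : ‖F.eval 1‖ ≤ (p : ℝ) ^ (-(n:ℤ)) := by
    rw [hFeval, one_pow, hnorm1u]; exact hu
  have hnlt : (p : ℝ) ^ (-(n:ℤ)) < ‖(2:ℤ_[p])‖ ^ 2 := by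
    have step1 : (p : ℝ) ^ (-(n:ℤ)) < ((p : ℝ) ^ (-(2:ℕ):ℤ)) ^ 2 := by
      rw [← zpow_natCast (((p:ℝ)) ^ (-(2:ℕ):ℤ)) 2, ← zpow_mul]
      apply zpow_lt_zpow_right₀ hp1
      push_cast; omega
    exact lt_of_lt_of_le step1 (pow_le_pow_left₀ (by positivity) h2.le 2)
  have hhyp : ‖F.eval 1‖ < ‖F.derivative.eval 1‖ ^ 2 := by
    rw [hFd, mul_one]
    exact lt_of_le_of_lt hsmall hnlt
  obtain ⟨z, hz0, hzlt, -, -⟩ := hensels_lemma hhyp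
  rw [Polynomial.coe_aeval_eq_eval, hFeval z, sub_eq_zero] at hz0
  rw [Polynomial.coe_aeval_eq_eval, hFd, mul_one] at hzlt
  -- ‖z + 1‖ = ‖2‖
  have hz1 : ‖z + 1‖ = ‖(2:ℤ_[p])‖ := by
    have : z + 1 = (z - 1) + 2 := by ring
    rw [this, PadicInt.norm_add_eq_max_of_ne (ne_of_lt hzlt), max_eq_right hzlt.le]
  -- ‖z - 1‖ ≤ p^{-k}
  have hzn : ‖z - 1‖ ≤ (p : ℝ) ^ (-(k:ℤ)) := by
    have hprod : ‖z - 1‖ * ‖(2:ℤ_[p])‖ = ‖u - 1‖ := by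
      rw [← hz1, ← norm_mul]
      have : (z - 1) * (z + 1) = z ^ 2 - 1 := by ring
      rw [this, hz0, ← hnorm1u, ← norm_neg, neg_sub]
    have h1 : ‖z - 1‖ = ‖u - 1‖ / ‖(2:ℤ_[p])‖ := by
      field_simp [ne_of_gt h2pos] at hprod ⊢; linarith
    rw [h1]
    have hinv : (1:ℝ) / ‖(2:ℤ_[p])‖ < (p:ℝ) ^ (2:ℤ) := by
      rw [div_lt_iff₀ h2pos]
      have := h2
      rw [show (-(2:ℕ):ℤ) = -(2:ℤ) by norm_num] at this
      calc (1:ℝ) = (p:ℝ) ^ (2:ℤ) * (p:ℝ) ^ (-(2:ℤ)) := by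
            rw [← zpow_add₀ (ne_of_gt hp0)]; norm_num
        _ < (p:ℝ) ^ (2:ℤ) * ‖(2:ℤ_[p])‖ := by
            apply mul_lt_mul_of_pos_left this (by positivity)
      -- goal: 1 < p^2 * ‖2‖
    calc ‖u - 1‖ / ‖(2:ℤ_[p])‖ = ‖u - 1‖ * (1 / ‖(2:ℤ_[p])‖) := by ring
      _ ≤ (p:ℝ) ^ (-(n:ℤ)) * ((p:ℝ) ^ (2:ℤ)) :=
          mul_le_mul hu hinv.le (by positivity) (by positivity)
      _ = (p:ℝ) ^ (-(n:ℤ) + 2) := by rw [← zpow_add₀ (ne_of_gt hp0)]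
      _ ≤ (p:ℝ) ^ (-(k:ℤ)) := by
          apply zpow_le_zpow_right₀ hp1.le; omega
  -- extract divisibility: z - 1 = p^k * t
  have hdvd : ((p:ℤ_[p]) ^ k) ∣ (z - 1) := by
    rw [← Ideal.mem_span_singleton, ← PadicInt.norm_le_pow_iff_mem_span_pow]
    exact_mod_cast hzn
  obtain ⟨t, ht⟩ := hdvd
  -- the new lattice element
  refine ⟨(z • l + t • (((p:ℤ_[p]) ^ k) • u₀)) + u₀,
    ⟨z • l + t • (((p:ℤ_[p]) ^ k) • u₀),
      L.add_mem (L.smul_mem _ hl) (L.smul_mem _ hk), rfl⟩, ?_⟩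
  have hrep : (z • l + t • (((p:ℤ_[p]) ^ k) • u₀)) + u₀ = z • (l + u₀) := by
    rw [smul_add]
    have : z • u₀ = u₀ + t • (((p:ℤ_[p]) ^ k) • u₀) := by
      have hz' : z = 1 + (p:ℤ_[p]) ^ k * t := by rw [← ht]; ring
      rw [hz', add_smul, one_smul, smul_smul, mul_comm]
    rw [this]
    abel
  rw [hrep]
  have : z • (l + u₀) = ((z : ℚ_[p])) • (l + u₀) := zsmul_eq_qsmul z (l + u₀)
  rw [this, QuadraticMap.map_smul]
  have hz2 : (z : ℚ_[p]) * (z : ℚ_[p]) = u := by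
    rw [← hu'c, ← hz0]; push_cast; ring
  rw [smul_eq_mul, hz2, mul_comm]
end

section
/- Let V_v be a nondegenerate quadratic space over a nonarchimedean local field F_v with dim V_v ≥ 3, or dim V_v = 2 and −det(V_v) not a square in F_v^×. Let L_v be a full lattice in V_v and s a positive integer. Then for every nonzero x ∈ V_v with q(x) ≠ 0 (x anisotropic), there exists an anisotropic vector y ∈ V_v such that x − y is anisotropic, ⟨x − y, y⟩ = 0, and x − y ∈ π_v^s L_v. -/
/-- Let `V` be a nondegenerate quadratic space over the nonarchimedean local
field `ℚ_[p]` with `dim V ≥ 3`, or `dim V = 2` and `−det(V)` a nonsquare.  Let `L` be a full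
`ℤ_[p]`-lattice and `s ≥ 1`.  For every anisotropic `x ≠ 0` there is an anisotropic `y` such
that `x − y` is anisotropic, `⟨x − y, y⟩ = 0`, and `x − y ∈ p^s L`. -/
theorem stmt_5 (p : ℕ) [Fact p.Prime] (V : Type*) [AddCommGroup V]
    [Module ℚ_[p] V] [FiniteDimensional ℚ_[p] V]
    [Module ℤ_[p] V] [IsScalarTower ℤ_[p] ℚ_[p] V]
    (Q : QuadraticForm ℚ_[p] V) (hQ : Q.polarBilin.Nondegenerate)
    (hdim : 3 ≤ Module.finrank ℚ_[p] V ∨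
      (Module.finrank ℚ_[p] V = 2 ∧
        ∀ b : Module.Basis (Fin 2) ℚ_[p] V, ¬ IsSquare (-((LinearMap.toMatrix₂ b b) Q.polarBilin).det)))
    (L : Submodule ℤ_[p] V) (hfg : L.FG)
    (hfull : Submodule.span ℚ_[p] (L : Set V) = ⊤)
    (s : ℕ) (hs : 0 < s)
    (x : V) (hx0 : x ≠ 0) (hx : Q x ≠ 0) :
    ∃ y : V, Q y ≠ 0 ∧ Q (x - y) ≠ 0 ∧ QuadraticMap.polar Q (x - y) y = 0 ∧
      ∃ l ∈ L, x - y = ((p : ℚ_[p]) ^ s) • l := by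
  classical
  have hp := (Fact.out : p.Prime)
  have hn2 : 2 ≤ Module.finrank ℚ_[p] V := by
    rcases hdim with h | ⟨h, _⟩ <;> omega
  -- basic facts about `polar`
  have Qadd : ∀ u v : V, Q (u + v) = Q u + Q v + QuadraticMap.polar (⇑Q) u v := by
    intro u v; unfold QuadraticMap.polar; ring
  have hpxx : QuadraticMap.polar (⇑Q) x x ≠ 0 := by
    rw [QuadraticMap.polar_self, two_nsmul]
    intro h; exact hx (add_self_eq_zero.mp h)
  -- Step 1 : find an anisotropic vector orthogonal to x
  obtain ⟨ξ, hξx, hξ0⟩ : ∃ ξ, QuadraticMap.polar (⇑Q) x ξ = 0 ∧ Q ξ ≠ 0 := by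
    by_contra hcon
    push_neg at hcon
    -- the kernel of the functional polar(x, ·) is nontrivial
    have hker : LinearMap.ker (Q.polarBilin x) ≠ ⊥ := by
      intro hbot
      have h1 := LinearMap.finrank_range_add_finrank_ker (Q.polarBilin x)
      have h2 : Module.finrank ℚ_[p] ↥(LinearMap.range (Q.polarBilin x)) ≤ 1 := by
        have := Submodule.finrank_le (LinearMap.range (Q.polarBilin x))
        simpa [Module.finrank_self] using this
      rw [hbot, finrank_bot] at h1
      omega
    obtain ⟨w, hwk, hw0⟩ := (Submodule.ne_bot_iff _).mp hker
    have hwx : QuadraticMap.polar (⇑Q) x w = 0 := by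
      simpa [QuadraticMap.polarBilin_apply_apply] using hwk
    have hQ' : ∀ m : V, (∀ v : V, Q.polarBilin m v = 0) → m = 0 := hQ.1
    refine hw0 (hQ' w ?_)
    intro v
    set r : ℚ_[p] := QuadraticMap.polar (⇑Q) x v / QuadraticMap.polar (⇑Q) x x with hr
    set z : V := v - r • x with hz
    have hzk : QuadraticMap.polar (⇑Q) x z = 0 := by
      rw [hz, QuadraticMap.polar_sub_right, QuadraticMap.polar_smul_right, smul_eq_mul, hr,
        div_mul_cancel₀ _ hpxx, sub_self]
    have hQw : Q w = 0 := hcon w hwx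
    have hQz : Q z = 0 := hcon z hzk
    have hQwz : Q (w + z) = 0 := by
      refine hcon _ ?_
      rw [QuadraticMap.polar_add_right, hwx, hzk, add_zero]
    have hpwz : QuadraticMap.polar (⇑Q) w z = 0 := by
      have : QuadraticMap.polar (⇑Q) w z = Q (w + z) - Q w - Q z := rfl
      rw [this, hQw, hQz, hQwz]; ring
    have hpwx : QuadraticMap.polar (⇑Q) w x = 0 := by
      rw [QuadraticMap.polar_comm]; exact hwx
    have hv : v = z + r • x := by rw [hz]; abel
    rw [QuadraticMap.polarBilin_apply_apply, hv, QuadraticMap.polar_add_right,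
      QuadraticMap.polar_smul_right, hpwz, hpwx, smul_zero, add_zero]
  -- Step 2 : a basis of V contained in L
  obtain ⟨bs, hbsL, hbspan, hbli⟩ := exists_linearIndependent ℚ_[p] (L : Set V)
  have hbtop : ⊤ ≤ Submodule.span ℚ_[p] (Set.range (Subtype.val : bs → V)) := by
    rw [Subtype.range_coe, hbspan, hfull]
  let b : Module.Basis bs ℚ_[p] V := Module.Basis.mk hbli hbtop
  haveI : Fintype bs := FiniteDimensional.fintypeBasisIndex b
  have hbL : ∀ i : bs, b i ∈ L := by
    intro i
    rw [Module.Basis.mk_apply]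
    exact hbsL i.2
  -- Step 3 : the construction
  obtain ⟨π, hπdef⟩ : ∃ π : ℚ_[p], π = (p : ℚ_[p]) := ⟨_, rfl⟩
  have hπ0 : π ≠ 0 := by
    rw [hπdef]; exact_mod_cast Nat.cast_ne_zero.mpr hp.ne_zero
  have hπn : ‖π‖ = ((p : ℝ))⁻¹ := by rw [hπdef]; exact Padic.norm_p
  have hp1 : (1 : ℝ) < (p : ℝ) := by exact_mod_cast hp.one_lt
  have hpR0 : (0 : ℝ) < (p : ℝ) := by positivity
  obtain ⟨a, haQ⟩ : ∃ a : ℚ_[p], a * Q x = Q ξ := ⟨Q ξ * (Q x)⁻¹, by field_simp⟩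
  obtain ⟨M, hMdef⟩ : ∃ M : NNReal, M = ‖a‖₊ ⊔
      ((Finset.univ.sup fun i : bs => ‖a * b.repr x i‖₊) ⊔
       (Finset.univ.sup fun i : bs => ‖b.repr ξ i‖₊)) := ⟨_, rfl⟩
  obtain ⟨n, hn⟩ : ∃ n : ℕ, (M : ℝ) < (p : ℝ) ^ n := pow_unbounded_of_one_lt _ hp1
  obtain ⟨t, ht⟩ : ∃ t : ℕ, t = s + n := ⟨_, rfl⟩
  obtain ⟨c, hcdef⟩ : ∃ c : ℚ_[p], c = 1 + a * (π ^ t * π ^ t) := ⟨_, rfl⟩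
  -- c is a unit of norm 1
  have hu : ‖a * (π ^ t * π ^ t)‖ < 1 := by
    have haM : ‖a‖ ≤ (M : ℝ) := by
      have : ‖a‖₊ ≤ M := hMdef ▸ le_sup_left
      exact_mod_cast this
    have h1 : ‖a‖ < (p : ℝ) ^ n := lt_of_le_of_lt haM hn
    have h2 : ‖π ^ t * π ^ t‖ ≤ ((p : ℝ) ^ n)⁻¹ := by
      rw [norm_mul, norm_pow, hπn, ← pow_add, ← inv_pow]
      apply pow_le_pow_of_le_one (by positivity)
        (by rw [inv_le_one_iff₀]; right; exact hp1.le)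
      omega
    calc ‖a * (π ^ t * π ^ t)‖ = ‖a‖ * ‖π ^ t * π ^ t‖ := norm_mul _ _
      _ ≤ ‖a‖ * ((p : ℝ) ^ n)⁻¹ := mul_le_mul_of_nonneg_left h2 (norm_nonneg _)
      _ < ((p : ℝ) ^ n) * ((p : ℝ) ^ n)⁻¹ := mul_lt_mul_of_pos_right h1 (by positivity)
      _ = 1 := mul_inv_cancel₀ (by positivity)
  have hc1 : ‖c‖ = 1 := by
    rw [hcdef, Padic.add_eq_max_of_ne (by rw [norm_one]; exact ne_of_gt hu), norm_one]
    exact max_eq_left hu.le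
  have hc0 : c ≠ 0 := by
    intro h; rw [h, norm_zero] at hc1; norm_num at hc1
  obtain ⟨y, hy⟩ : ∃ y : V, y = c⁻¹ • (x + π ^ t • ξ) := ⟨_, rfl⟩
  -- value of Q on x + π^t ξ
  have hQxξ : Q (x + π ^ t • ξ) = Q x * c := by
    rw [Qadd, QuadraticMap.map_smul, QuadraticMap.polar_smul_right, hξx, smul_zero, add_zero,
      smul_eq_mul]
    linear_combination -(π ^ t * π ^ t) * haQ - Q x * hcdef
  have hQy : Q y = c⁻¹ * Q x := by
    rw [hy, QuadraticMap.map_smul, hQxξ, smul_eq_mul]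
    field_simp
  have hQy0 : Q y ≠ 0 := by
    rw [hQy]; exact mul_ne_zero (inv_ne_zero hc0) hx
  -- expression for x - y
  have hxy : x - y = (c⁻¹ * (a * (π ^ t * π ^ t))) • x - (c⁻¹ * π ^ t) • ξ := by
    rw [hy]
    match_scalars
    · field_simp
      linear_combination hcdef
    · ring
  have hQxy : Q (x - y) = c⁻¹ * (π ^ t * π ^ t * Q ξ) := by
    rw [hxy, sub_eq_add_neg, ← neg_smul, Qadd, QuadraticMap.map_smul, QuadraticMap.map_smul,
      QuadraticMap.polar_smul_right, QuadraticMap.polar_smul_left, hξx, smul_zero, smul_zero,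
      add_zero, smul_eq_mul, smul_eq_mul]
    field_simp
    linear_combination (c - 1) * haQ -
      (a * Q x) * hcdef
  have hQxy0 : Q (x - y) ≠ 0 := by
    rw [hQxy]
    exact mul_ne_zero (inv_ne_zero hc0)
      (mul_ne_zero (mul_ne_zero (pow_ne_zero _ hπ0) (pow_ne_zero _ hπ0)) hξ0)
  have hpolar : QuadraticMap.polar (⇑Q) (x - y) y = 0 := by
    have h1 : Q (x - y + y) = Q (x - y) + Q y + QuadraticMap.polar (⇑Q) (x - y) y := Qadd _ _
    rw [sub_add_cancel, hQxy, hQy] at h1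
    have h2 : QuadraticMap.polar (⇑Q) (x - y) y
        = Q x - c⁻¹ * (π ^ t * π ^ t * Q ξ) - c⁻¹ * Q x := by linear_combination -h1
    rw [h2]
    field_simp
    linear_combination Q x * hcdef + (π ^ t * π ^ t) * haQ
  -- Step 4 : membership in p^s L
  obtain ⟨l, hl⟩ : ∃ l : V, l = (c⁻¹ * π ^ n) • ((a * π ^ t) • x - ξ) := ⟨_, rfl⟩
  have hxl : x - y = π ^ s • l := by
    rw [hxy, hl, ht]
    match_scalars
    · rw [pow_add]; ring
    · rw [pow_add]; ring
  have hlL : l ∈ L := by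
    rw [← Module.Basis.sum_repr b l]
    apply Submodule.sum_mem
    intro i _
    have hrepr : b.repr l i = (c⁻¹ * π ^ n) * ((a * π ^ t) * b.repr x i - b.repr ξ i) := by
      rw [hl, map_smul, map_sub, map_smul]
      simp [mul_sub]
    have hbound : ‖b.repr l i‖ ≤ 1 := by
      rw [hrepr, norm_mul, norm_mul, norm_inv, hc1, inv_one, one_mul, norm_pow, hπn]
      have hAi : ‖(a * π ^ t) * b.repr x i - b.repr ξ i‖ ≤ (p : ℝ) ^ n := by
        have h1 : ‖(a * π ^ t) * b.repr x i‖ ≤ (p : ℝ) ^ n := by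
          have hx1 : ‖a * b.repr x i‖ ≤ (M : ℝ) := by
            have : ‖a * b.repr x i‖₊ ≤ M := hMdef ▸ le_trans
              (Finset.le_sup (f := fun i : bs => ‖a * b.repr x i‖₊) (Finset.mem_univ i))
              (le_trans le_sup_left le_sup_right)
            exact_mod_cast this
          have hπt : ‖π ^ t‖ ≤ 1 := by
            rw [norm_pow, hπn]
            exact pow_le_one₀ (by positivity) (by rw [inv_le_one_iff₀]; right; exact hp1.le)
          calc ‖(a * π ^ t) * b.repr x i‖ = ‖a * b.repr x i‖ * ‖π ^ t‖ := by
                rw [← norm_mul]; congr 1; ring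
            _ ≤ (M : ℝ) * 1 := mul_le_mul hx1 hπt (norm_nonneg _) (by positivity)
            _ ≤ (p : ℝ) ^ n := by rw [mul_one]; exact hn.le
        have h2 : ‖b.repr ξ i‖ ≤ (p : ℝ) ^ n := by
          have : ‖b.repr ξ i‖₊ ≤ M := hMdef ▸ le_trans
            (Finset.le_sup (f := fun i : bs => ‖b.repr ξ i‖₊) (Finset.mem_univ i))
            (le_trans le_sup_right le_sup_right)
          have h' : ‖b.repr ξ i‖ ≤ (M : ℝ) := by exact_mod_cast this
          exact le_trans h' hn.le
        calc ‖(a * π ^ t) * b.repr x i - b.repr ξ i‖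
            = ‖(a * π ^ t) * b.repr x i + (- b.repr ξ i)‖ := by rw [sub_eq_add_neg]
          _ ≤ max ‖(a * π ^ t) * b.repr x i‖ ‖- b.repr ξ i‖ := Padic.nonarchimedean _ _
          _ ≤ (p : ℝ) ^ n := by rw [norm_neg]; exact max_le h1 h2
      calc ((p : ℝ))⁻¹ ^ n * ‖(a * π ^ t) * b.repr x i - b.repr ξ i‖
          ≤ ((p : ℝ))⁻¹ ^ n * (p : ℝ) ^ n :=
            mul_le_mul_of_nonneg_left hAi (by positivity)
        _ = 1 := by rw [← mul_pow, inv_mul_cancel₀ (ne_of_gt hpR0), one_pow]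
    obtain ⟨zz, hzeq⟩ : ∃ zz : ℤ_[p], (zz : ℚ_[p]) = b.repr l i := ⟨⟨_, hbound⟩, rfl⟩
    have hzz : ((zz : ℚ_[p])) • b i = zz • b i := algebraMap_smul ℚ_[p] zz (b i)
    rw [← hzeq, hzz]
    exact Submodule.smul_mem L _ (hbL i)
  refine ⟨y, hQy0, hQxy0, hpolar, l, hlL, ?_⟩
  rw [hxl, hπdef]
end

section
/- Let V_v be a nondegenerate quadratic space over a nonarchimedean local field F_v with dim V_v ≥ 3 (or dim V_v = 2 with −det(V_v) a nonsquare). Let L_v be a full lattice and s a positive integer. For every isotropic vector x ≠ 0 in V_v (q(x) = 0), there exists an anisotropic vector y such that x − y is anisotropic, ⟨x − y, y⟩ = 0, and x − y ∈ π_v^s L_v. -/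
open QuadraticMap

/-- Let `V` be a nondegenerate quadratic space over the nonarchimedean local
field `ℚ_[p]` with `dim V ≥ 3` (or `dim V = 2` with `−det(V)` a nonsquare).  Let `L` be a full
`ℤ_[p]`-lattice and `s ≥ 1`.  For every isotropic `x ≠ 0` (`Q x = 0`) there is an anisotropic
`y` such that `x − y` is anisotropic, `⟨x − y, y⟩ = 0`, and `x − y ∈ p^s L`. -/
theorem stmt_6 (p : ℕ) [Fact p.Prime] (V : Type*) [AddCommGroup V]
    [Module ℚ_[p] V] [FiniteDimensional ℚ_[p] V]
    [Module ℤ_[p] V] [IsScalarTower ℤ_[p] ℚ_[p] V]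
    (Q : QuadraticForm ℚ_[p] V) (hQ : Q.polarBilin.Nondegenerate)
    (hdim : 3 ≤ Module.finrank ℚ_[p] V ∨
      (Module.finrank ℚ_[p] V = 2 ∧
        ∀ b : Module.Basis (Fin 2) ℚ_[p] V, ¬ IsSquare (-((LinearMap.toMatrix₂ b b) Q.polarBilin).det)))
    (L : Submodule ℤ_[p] V) (hfg : L.FG)
    (hfull : Submodule.span ℚ_[p] (L : Set V) = ⊤)
    (s : ℕ) (hs : 0 < s)
    (x : V) (hx0 : x ≠ 0) (hx : Q x = 0) :
    ∃ y : V, Q y ≠ 0 ∧ Q (x - y) ≠ 0 ∧ QuadraticMap.polar Q (x - y) y = 0 ∧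
      ∃ l ∈ L, x - y = ((p : ℚ_[p]) ^ s) • l := by
  have hp1 : (1:ℝ) < (p:ℝ) := by exact_mod_cast (Fact.out : p.Prime).one_lt
  have hpQ : (p : ℚ_[p]) ≠ 0 := by exact_mod_cast (Fact.out : p.Prime).ne_zero
  -- expansion lemma
  have expand : ∀ u v : V, Q (u - v) = Q u + Q v - QuadraticMap.polar Q u v := by
    intro u v
    rw [sub_eq_add_neg, QuadraticMap.map_add (⇑Q) u (-v), QuadraticMap.map_neg,
      polar_neg_right]
    ring
  -- lattice facts
  have hZ : ∀ (c : ℚ_[p]), ‖c‖ ≤ 1 → ∀ v ∈ L, c • v ∈ L := by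
    intro c hc v hv
    have h1 := L.smul_mem (⟨c, hc⟩ : ℤ_[p]) hv
    have h2 := algebraMap_smul (R := ℤ_[p]) ℚ_[p] (⟨c, hc⟩ : ℤ_[p]) v
    rw [← h2] at h1
    exact h1
  have hppow : ∀ k : ℕ, ‖(p : ℚ_[p]) ^ k‖ ≤ 1 := by
    intro k
    rw [norm_pow]
    apply pow_le_one₀ (norm_nonneg _)
    rw [Padic.norm_p]
    exact inv_le_one_of_one_le₀ hp1.le
  have key : ∀ v : V, ∃ n : ℕ, ((p : ℚ_[p]) ^ n) • v ∈ L := by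
    intro v
    have hv : v ∈ Submodule.span ℚ_[p] (L : Set V) := hfull ▸ Submodule.mem_top
    induction hv using Submodule.span_induction with
    | mem z hz => exact ⟨0, by simpa using hz⟩
    | zero => exact ⟨0, by simp⟩
    | add u u' _ _ hu hu' =>
        obtain ⟨m, hm⟩ := hu
        obtain ⟨n, hn⟩ := hu'
        refine ⟨m + n, ?_⟩
        have h1 := hZ _ (hppow n) _ hm
        have h2 := hZ _ (hppow m) _ hn
        rw [smul_smul, ← pow_add] at h1 h2
        rw [smul_add]
        exact L.add_mem (by rwa [Nat.add_comm] at h1) h2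
    | smul c u _ hu =>
        obtain ⟨n, hn⟩ := hu
        obtain ⟨k, hk⟩ := pow_unbounded_of_one_lt ‖c‖ hp1
        refine ⟨k + n, ?_⟩
        have hnorm : ‖(p : ℚ_[p]) ^ k * c‖ ≤ 1 := by
          rw [norm_mul, norm_pow, Padic.norm_p]
          calc ((p:ℝ)⁻¹) ^ k * ‖c‖ ≤ ((p:ℝ)⁻¹) ^ k * (p:ℝ) ^ k := by
                apply mul_le_mul_of_nonneg_left hk.le (by positivity)
            _ = 1 := by rw [← mul_pow, inv_mul_cancel₀ (by positivity), one_pow]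
        have h1 := hZ _ hnorm _ hn
        rw [smul_smul] at h1
        rw [smul_smul]
        have e : (p : ℚ_[p]) ^ (k + n) * c = (p : ℚ_[p]) ^ k * c * (p : ℚ_[p]) ^ n := by ring
        rw [e]
        exact h1
  -- construct w with polar Q x w = 2 and Q w = 0
  obtain ⟨w, hxw, hQw⟩ : ∃ w : V, QuadraticMap.polar Q x w = 2 ∧ Q w = 0 := by
    obtain ⟨w₀, hw₀⟩ : ∃ w₀, QuadraticMap.polar Q x w₀ ≠ 0 := by
      by_contra h
      push_neg at h
      exact hx0 (hQ.1 x fun n => by rw [polarBilin_apply_apply]; exact h n)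
    obtain ⟨w₁, hxw₁⟩ : ∃ w₁, QuadraticMap.polar Q x w₁ = 2 := by
      refine ⟨(2 / QuadraticMap.polar Q x w₀) • w₀, ?_⟩
      rw [polar_smul_right, smul_eq_mul]
      field_simp
    refine ⟨w₁ - (Q w₁ / 2) • x, ?_, ?_⟩
    · rw [polar_sub_right, hxw₁, polar_smul_right, polar_self, hx]
      simp
    · rw [expand, QuadraticMap.map_smul, polar_smul_right, polar_comm, hxw₁, hx]
      simp only [smul_eq_mul]
      ring
  -- construct h orthogonal to x and w with Q h ≠ 0
  obtain ⟨h, hxh, hwh, hQh⟩ :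
      ∃ h : V, QuadraticMap.polar Q x h = 0 ∧ QuadraticMap.polar Q w h = 0 ∧ Q h ≠ 0 := by
    rcases hdim with hdim | ⟨hdim2, hns⟩
    · set φ : V →ₗ[ℚ_[p]] ℚ_[p] × ℚ_[p] := (Q.polarBilin x).prod (Q.polarBilin w) with hφ
      have hker : LinearMap.ker φ ≠ ⊥ := by
        intro hbot
        have h1 := LinearMap.finrank_range_add_finrank_ker φ
        rw [hbot, finrank_bot, add_zero] at h1
        have h2 : Module.finrank ℚ_[p] ↥(LinearMap.range φ) ≤ 2 := by
          have := Submodule.finrank_le (LinearMap.range φ)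
          simpa [Module.finrank_prod] using this
        omega
      obtain ⟨u, huker, hu0⟩ := Submodule.exists_mem_ne_zero_of_ne_bot hker
      rw [LinearMap.mem_ker, hφ] at huker
      have hux : QuadraticMap.polar Q x u = 0 := by
        have := congrArg Prod.fst huker
        simpa [polarBilin_apply_apply] using this
      have huw : QuadraticMap.polar Q w u = 0 := by
        have := congrArg Prod.snd huker
        simpa [polarBilin_apply_apply] using this
      by_cases hQu : Q u ≠ 0
      · exact ⟨u, hux, huw, hQu⟩
      push_neg at hQu
      obtain ⟨v, hv⟩ : ∃ v, QuadraticMap.polar Q u v ≠ 0 := by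
        by_contra h
        push_neg at h
        exact hu0 (hQ.1 u fun n => by rw [polarBilin_apply_apply]; exact h n)
      set v' := v - (QuadraticMap.polar Q w v / 2) • x - (QuadraticMap.polar Q x v / 2) • w
        with hv'
      have hxv' : QuadraticMap.polar Q x v' = 0 := by
        rw [hv', polar_sub_right, polar_sub_right, polar_smul_right, polar_smul_right,
          polar_self, hx, hxw]
        simp
      have hwv' : QuadraticMap.polar Q w v' = 0 := by
        rw [hv', polar_sub_right, polar_sub_right, polar_smul_right, polar_smul_right,
          polar_self, hQw, polar_comm Q w x, hxw]
        simp
      have huv' : QuadraticMap.polar Q u v' = QuadraticMap.polar Q u v := by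
        rw [hv', polar_sub_right, polar_sub_right, polar_smul_right, polar_smul_right,
          polar_comm Q u x, polar_comm Q u w, hux, huw]
        simp
      by_cases hQv' : Q v' ≠ 0
      · exact ⟨v', hxv', hwv', hQv'⟩
      push_neg at hQv'
      refine ⟨u + v', ?_, ?_, ?_⟩
      · rw [polar_add_right, hux, hxv', add_zero]
      · rw [polar_add_right, huw, hwv', add_zero]
      · rw [QuadraticMap.map_add (⇑Q) u v', hQu, hQv', huv']
        simpa using hv
    · exfalso
      have hli : LinearIndependent ℚ_[p] ![x, w] := by
        rw [LinearIndependent.pair_iff]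
        intro a b hab
        have h1 : QuadraticMap.polar Q x (a • x + b • w) = 0 := by rw [hab, polar_zero_right]
        rw [polar_add_right, polar_smul_right, polar_smul_right, polar_self, hx, hxw] at h1
        simp at h1
        subst h1
        simp at hab
        rcases hab with h | h
        · exact ⟨h, rfl⟩
        · exact absurd h hx0
      have hcard : Fintype.card (Fin 2) = Module.finrank ℚ_[p] V := by simp [hdim2]
      set b := basisOfLinearIndependentOfCardEqFinrank hli hcard with hb
      apply hns b
      have hb0 : b 0 = x := by rw [hb, coe_basisOfLinearIndependentOfCardEqFinrank]; rfl
      have hb1 : b 1 = w := by rw [hb, coe_basisOfLinearIndependentOfCardEqFinrank]; rfl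
      have hdet : ((LinearMap.toMatrix₂ b b) Q.polarBilin).det = -4 := by
        rw [Matrix.det_fin_two]
        simp only [LinearMap.toMatrix₂_apply, hb0, hb1, polarBilin_apply_apply]
        rw [polar_self, polar_self, hx, hQw, hxw, polar_comm Q w x, hxw]
        norm_num
      rw [hdet]
      exact ⟨2, by norm_num⟩
  -- choose the scaling
  obtain ⟨n₁, hn₁⟩ := key (Q h • w)
  obtain ⟨n₂, hn₂⟩ := key h
  set A : ℚ_[p] := (p : ℚ_[p]) ^ (s + n₁ + n₂) with hA
  have hA0 : A ≠ 0 := by rw [hA]; exact pow_ne_zero _ hpQ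
  set z : V := (A ^ 2 * Q h) • w - A • h with hz
  -- properties of z
  have hQz : Q z = A ^ 2 * Q h := by
    rw [hz, expand, QuadraticMap.map_smul, QuadraticMap.map_smul,
      polar_smul_left, polar_smul_right, hQw, hwh]
    simp only [smul_eq_mul]
    ring
  have hpolxz : QuadraticMap.polar Q x z = 2 * (A ^ 2 * Q h) := by
    rw [hz, polar_sub_right, polar_smul_right, polar_smul_right, hxw, hxh]
    simp only [smul_eq_mul]
    ring
  have hQxz : Q (x - z) = -(A ^ 2 * Q h) := by
    rw [expand, hx, hQz, hpolxz]
    ring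
  have hAQh : A ^ 2 * Q h ≠ 0 := mul_ne_zero (pow_ne_zero _ hA0) hQh
  refine ⟨x - z, ?_, ?_, ?_, ?_⟩
  · rw [hQxz]
    exact neg_ne_zero.mpr hAQh
  · rw [sub_sub_cancel, hQz]
    exact hAQh
  · rw [sub_sub_cancel, polar_sub_right, polar_comm Q z x, hpolxz, polar_self, hQz]
    simp only [nsmul_eq_mul]
    push_cast
    ring
  · refine ⟨((p : ℚ_[p]) ^ (s + n₁ + 2 * n₂) * ((p : ℚ_[p]) ^ n₁ * Q h)) • w -
      ((p : ℚ_[p]) ^ n₁ * (p : ℚ_[p]) ^ n₂) • h, ?_, ?_⟩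
    · refine L.sub_mem ?_ ?_
      · rw [← smul_smul]
        exact hZ _ (hppow _) _ (by rw [← smul_smul]; exact hn₁)
      · rw [← smul_smul]
        exact hZ _ (hppow _) _ hn₂
    · rw [sub_sub_cancel, hz, smul_sub, smul_smul, smul_smul]
      congr 1
      · congr 1
        rw [hA]
        ring
      · congr 1
        rw [hA]
        ring
end
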